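/- If a primitive event (X,w) = x is part of a cause of an event α in a recursive causal Kripke setting (K,t) at a world w' according to the MODIFIED HP definition of actual causality, then (X,w) = x is part of a cause of α in (K,t) at w' according to the ORIGINAL HP definition. -/

import Mathlib

open Classical

noncomputable section

/-- A causal Kripke model `K = (S, W, Rel, F)`: the signature `S` consists of the disjoint
finite sets `Exo` of exogenous and `Endo` of endogenous variables together with a finite
nonempty range `range Γ w` of possible values for each variable `Γ` at each world `w`;
`World` is a finite set of possible worlds, `Rel` is the accessibility relation, and `eqs`
assigns to each endogenous variable `X` and world `w` a structural equation computing the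
value of `(X,w)` from the values of all the other variables (it does not depend on the
coordinate `(X,w)` itself, and its value lies in the range of `(X,w)`). -/
structure CKM where
  Exo : Type
  Endo : Type
  World : Type
  Val : Type
  exoFin : Fintype Exo
  endoFin : Fintype Endo
  worldFin : Fintype World
  Rel : World → World → Prop
  range : (Exo ⊕ Endo) → World → Finset Val
  range_nonempty : ∀ Γ w, (range Γ w).Nonempty
  eqs : Endo → World → (((Exo ⊕ Endo) × World) → Val) → Val
  eqs_mem : ∀ X w g, eqs X w g ∈ range (Sum.inr X) w
  eqs_indep : ∀ X w g g',
    (∀ p, p ≠ (Sum.inr X, w) → g p = g' p) → eqs X w g = eqs X w g'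

namespace CKM

/-- A context assigns to every exogenous variable at every world a value in its range. -/
def ValidContext (K : CKM) (t : K.Exo → K.World → K.Val) : Prop :=
  ∀ U w, t U w ∈ K.range (Sum.inl U) w

/-- `v` is a solution of the causal Kripke setting `(K, t)`: it agrees with the context `t`
on all exogenous variables and satisfies all structural equations. -/
def Solves (K : CKM) (t : K.Exo → K.World → K.Val)
    (v : ((K.Exo ⊕ K.Endo) × K.World) → K.Val) : Prop :=
  (∀ U w, v (Sum.inl U, w) = t U w) ∧ ∀ X w, v (Sum.inr X, w) = K.eqs X w v

/-- The variable `p` influences the (endogenous) variable `q` (i.e. `q` directly causally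
depends on `p`): some change in the value of `p`, keeping all other variables fixed
(within their ranges), changes the value of the structural equation of `q`. -/
def Influences (K : CKM) (p q : (K.Exo ⊕ K.Endo) × K.World) : Prop :=
  ∃ X w, q = (Sum.inr X, w) ∧
    ∃ g g', (∀ r, g r ∈ K.range r.1 r.2) ∧ (∀ r, g' r ∈ K.range r.1 r.2) ∧
      (∀ r, r ≠ p → g r = g' r) ∧ K.eqs X w g ≠ K.eqs X w g'

/-- A causal Kripke model is recursive if it contains no cyclic dependencies. -/
def Recursive (K : CKM) : Prop :=
  ∀ p, ¬ Relation.TransGen K.Influences p p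

/-- The causal Kripke model obtained from `K` by the intervention setting the variables in
`dom` to the values prescribed by `val`. -/
def doInt (K : CKM) (dom : Finset (K.Endo × K.World)) (val : K.Endo × K.World → K.Val) :
    CKM :=
  { K with
    eqs := fun X w g =>
      if (X, w) ∈ dom ∧ val (X, w) ∈ K.range (Sum.inr X) w then val (X, w)
      else K.eqs X w g
    eqs_mem := by
      intro X w g
      by_cases h : (X, w) ∈ dom ∧ val (X, w) ∈ K.range (Sum.inr X) w
      · simp only [if_pos h]; exact h.2
      · simp only [if_neg h]; exact K.eqs_mem X w g
    eqs_indep := by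
      intro X w g g' hgg'
      by_cases h : (X, w) ∈ dom ∧ val (X, w) ∈ K.range (Sum.inr X) w
      · simp only [if_pos h]
      · simp only [if_neg h]; exact K.eqs_indep X w g g' hgg' }

end CKM

/-- Events (modal-Boolean combinations of primitive events): primitive events `X = x` and
`(X,w) = x`, negation, conjunction and the modal operator `□`. -/
inductive Event (E W V : Type) : Type
  | eq : E → V → Event E W V
  | eqAt : E → W → V → Event E W V
  | neg : Event E W V → Event E W V
  | conj : Event E W V → Event E W V → Event E W V
  | box : Event E W V → Event E W V

namespace CKM

/-- Satisfaction of an event at a world of `K`, relative to a solution `v` of the setting. -/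
def SatE (K : CKM) (v : ((K.Exo ⊕ K.Endo) × K.World) → K.Val) :
    K.World → Event K.Endo K.World K.Val → Prop
  | w, .eq X x => v (Sum.inr X, w) = x
  | _, .eqAt X w' x => v (Sum.inr X, w') = x
  | w, .neg α => ¬ SatE K v w α
  | w, .conj α β => SatE K v w α ∧ SatE K v w β
  | w, .box α => ∀ w', K.Rel w w' → SatE K v w' α

/-- `(K,t,w) ⊩ [dom ← val] α` : the event `α` holds at `w` in the model obtained from the
intervention `dom ← val`, in the context `t`. -/
def SatI (K : CKM) (t : K.Exo → K.World → K.Val) (dom : Finset (K.Endo × K.World))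
    (val : K.Endo × K.World → K.Val) (w : K.World) (α : Event K.Endo K.World K.Val) :
    Prop :=
  ∀ v, (K.doInt dom val).Solves t v → (K.doInt dom val).SatE v w α

/-- AC1 : `α` actually holds at `w`, and each conjunct `(X_i, w_j) = y_ij` of `Y = y`
actually holds. -/
def AC1 (K : CKM) (t : K.Exo → K.World → K.Val) (w : K.World)
    (Y : Finset (K.Endo × K.World)) (y : K.Endo × K.World → K.Val)
    (α : Event K.Endo K.World K.Val) : Prop :=
  ∀ v, K.Solves t v → K.SatE v w α ∧ ∀ p ∈ Y, v (Sum.inr p.1, p.2) = y p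

/-- AC2a together with AC2bᵒ (they share the partition `Z`, `N` and the setting `n`):
there is a partition of the endogenous variables into `Z ⊇ Y` and `N` and settings `y'`
of `Y` and `n` of `N` such that `(K,t,w) ⊩ [Y ← y', N ← n] ¬α`, and, where `z*` are the
actual values of the variables of `Z`, for every subset `Z'` of `Z \ Y`,
`(K,t,w) ⊩ [Y ← y, N ← n, Z' ← z'*] α`. -/
def AC2o (K : CKM) (t : K.Exo → K.World → K.Val) (w : K.World)
    (Y : Finset (K.Endo × K.World)) (y : K.Endo × K.World → K.Val)
    (α : Event K.Endo K.World K.Val) : Prop :=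
  ∃ Z N : Finset (K.Endo × K.World), ∃ y' n : K.Endo × K.World → K.Val,
    Y ⊆ Z ∧ Disjoint Z N ∧ (∀ p : K.Endo × K.World, p ∈ Z ∨ p ∈ N) ∧
    (∀ p ∈ Y, y' p ∈ K.range (Sum.inr p.1) p.2) ∧
    (∀ p ∈ N, n p ∈ K.range (Sum.inr p.1) p.2) ∧
    K.SatI t (Y ∪ N) (fun p => if p ∈ Y then y' p else n p) w (.neg α) ∧
    ∀ v, K.Solves t v → ∀ Z' ⊆ Z \ Y,
      K.SatI t (Y ∪ N ∪ Z')
        (fun p => if p ∈ Y then y p else if p ∈ N then n p else v (Sum.inr p.1, p.2)) w α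

/-- AC2a together with AC2bᵘ (updated definition): as in `AC2o`, but moreover the
restoration of the actual values `z'*` must keep `α` true for every subset `N'` of `N`. -/
def AC2u (K : CKM) (t : K.Exo → K.World → K.Val) (w : K.World)
    (Y : Finset (K.Endo × K.World)) (y : K.Endo × K.World → K.Val)
    (α : Event K.Endo K.World K.Val) : Prop :=
  ∃ Z N : Finset (K.Endo × K.World), ∃ y' n : K.Endo × K.World → K.Val,
    Y ⊆ Z ∧ Disjoint Z N ∧ (∀ p : K.Endo × K.World, p ∈ Z ∨ p ∈ N) ∧
    (∀ p ∈ Y, y' p ∈ K.range (Sum.inr p.1) p.2) ∧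
    (∀ p ∈ N, n p ∈ K.range (Sum.inr p.1) p.2) ∧
    K.SatI t (Y ∪ N) (fun p => if p ∈ Y then y' p else n p) w (.neg α) ∧
    ∀ v, K.Solves t v → ∀ Z' ⊆ Z \ Y, ∀ N' ⊆ N,
      K.SatI t (Y ∪ N' ∪ Z')
        (fun p => if p ∈ Y then y p else if p ∈ N' then n p else v (Sum.inr p.1, p.2)) w α

/-- AC2aᵐ (modified definition): there are a set `N` of endogenous variables and a setting
`y'` of the variables in `Y` such that, where `n*` are the actual values of the variables
in `N`, `(K,t,w) ⊩ [Y ← y', N ← n*] ¬α`. -/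
def AC2m (K : CKM) (t : K.Exo → K.World → K.Val) (w : K.World)
    (Y : Finset (K.Endo × K.World)) (y : K.Endo × K.World → K.Val)
    (α : Event K.Endo K.World K.Val) : Prop :=
  ∃ N : Finset (K.Endo × K.World), ∃ y' : K.Endo × K.World → K.Val,
    (∀ p ∈ Y, y' p ∈ K.range (Sum.inr p.1) p.2) ∧
    ∀ v, K.Solves t v →
      K.SatI t (Y ∪ N)
        (fun p => if p ∈ Y then y' p else v (Sum.inr p.1, p.2)) w (.neg α)

/-- `Y = y` is an actual cause of `α` in `(K,t)` at `w` by the ORIGINAL HP definition. -/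
def IsCauseO (K : CKM) (t : K.Exo → K.World → K.Val) (w : K.World)
    (Y : Finset (K.Endo × K.World)) (y : K.Endo × K.World → K.Val)
    (α : Event K.Endo K.World K.Val) : Prop :=
  K.AC1 t w Y y α ∧ K.AC2o t w Y y α ∧
    ∀ Y' ⊂ Y, ∀ y'' : K.Endo × K.World → K.Val,
      ¬ (K.AC1 t w Y' y'' α ∧ K.AC2o t w Y' y'' α)

/-- `Y = y` is an actual cause of `α` in `(K,t)` at `w` by the UPDATED HP definition. -/
def IsCauseU (K : CKM) (t : K.Exo → K.World → K.Val) (w : K.World)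
    (Y : Finset (K.Endo × K.World)) (y : K.Endo × K.World → K.Val)
    (α : Event K.Endo K.World K.Val) : Prop :=
  K.AC1 t w Y y α ∧ K.AC2u t w Y y α ∧
    ∀ Y' ⊂ Y, ∀ y'' : K.Endo × K.World → K.Val,
      ¬ (K.AC1 t w Y' y'' α ∧ K.AC2u t w Y' y'' α)

/-- `Y = y` is an actual cause of `α` in `(K,t)` at `w` by the MODIFIED HP definition. -/
def IsCauseM (K : CKM) (t : K.Exo → K.World → K.Val) (w : K.World)
    (Y : Finset (K.Endo × K.World)) (y : K.Endo × K.World → K.Val)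
    (α : Event K.Endo K.World K.Val) : Prop :=
  K.AC1 t w Y y α ∧ K.AC2m t w Y y α ∧
    ∀ Y' ⊂ Y, ∀ y'' : K.Endo × K.World → K.Val,
      ¬ (K.AC1 t w Y' y'' α ∧ K.AC2m t w Y' y'' α)

/-- `(X,w) = x` is part of a cause of `α` in `(K,t)` at `w'` by the original HP
definition: it is a conjunct of some actual cause `Y = y` of `α` at `w'`. -/
def PartOfCauseO (K : CKM) (t : K.Exo → K.World → K.Val) (w' : K.World)
    (X : K.Endo) (w : K.World) (x : K.Val) (α : Event K.Endo K.World K.Val) : Prop :=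
  ∃ Y y, K.IsCauseO t w' Y y α ∧ (X, w) ∈ Y ∧ y (X, w) = x

/-- `(X,w) = x` is part of a cause of `α` in `(K,t)` at `w'` by the updated HP
definition. -/
def PartOfCauseU (K : CKM) (t : K.Exo → K.World → K.Val) (w' : K.World)
    (X : K.Endo) (w : K.World) (x : K.Val) (α : Event K.Endo K.World K.Val) : Prop :=
  ∃ Y y, K.IsCauseU t w' Y y α ∧ (X, w) ∈ Y ∧ y (X, w) = x

/-- `(X,w) = x` is part of a cause of `α` in `(K,t)` at `w'` by the modified HP
definition. -/
def PartOfCauseM (K : CKM) (t : K.Exo → K.World → K.Val) (w' : K.World)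
    (X : K.Endo) (w : K.World) (x : K.Val) (α : Event K.Endo K.World K.Val) : Prop :=
  ∃ Y y, K.IsCauseM t w' Y y α ∧ (X, w) ∈ Y ∧ y (X, w) = x

end CKM
namespace CKM

/-- Structural equations only depend on the values of influencing variables
(among range-valued assignments). -/
lemma eqs_congr_aux (K : CKM) (X : K.Endo) (w : K.World)
    (g' : ((K.Exo ⊕ K.Endo) × K.World) → K.Val)
    (hg' : ∀ r, g' r ∈ K.range r.1 r.2) :
    ∀ (n : ℕ) (s : Finset ((K.Exo ⊕ K.Endo) × K.World))
      (g : ((K.Exo ⊕ K.Endo) × K.World) → K.Val),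
    (∀ r, g r ∈ K.range r.1 r.2) →
    (∀ q, K.Influences q (Sum.inr X, w) → g q = g' q) →
    (∀ q, g q ≠ g' q → q ∈ s) → s.card ≤ n →
    K.eqs X w g = K.eqs X w g' := by
  intro n
  induction n with
  | zero =>
    intro s g _ _ hs hcard
    have : g = g' := by
      funext q
      by_contra hq
      have hmem := hs q hq
      rw [Finset.card_eq_zero.mp (Nat.le_zero.mp hcard)] at hmem
      exact absurd hmem (Finset.notMem_empty q)
    rw [this]
  | succ n ih =>
    intro s g hg hagree hs hcard
    by_cases hall : ∀ q, g q = g' q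
    · rw [funext hall]
    · push_neg at hall
      obtain ⟨q, hq⟩ := hall
      set g'' := Function.update g q (g' q) with hg''def
      have hg'' : ∀ r, g'' r ∈ K.range r.1 r.2 := by
        intro r
        by_cases hr : r = q
        · subst hr; simp only [hg''def, Function.update_self]; exact hg' r
        · simp only [hg''def, Function.update_of_ne hr]; exact hg r
      have hstep : K.eqs X w g = K.eqs X w g'' := by
        by_contra hne
        exact hq (hagree q ⟨X, w, rfl, g, g'', hg, hg'',
          fun r hr => (Function.update_of_ne hr _ _).symm, hne⟩)
      have hagree'' : ∀ q', K.Influences q' (Sum.inr X, w) → g'' q' = g' q' := by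
        intro q' hq'
        by_cases hr : q' = q
        · subst hr; simp only [hg''def, Function.update_self]
        · simp only [hg''def, Function.update_of_ne hr]; exact hagree q' hq'
      have hmemq : q ∈ s := hs q hq
      have hs'' : ∀ r, g'' r ≠ g' r → r ∈ s.erase q := by
        intro r hr
        have hrq : r ≠ q := by
          intro h; subst h
          simp only [hg''def, Function.update_self] at hr
          exact hr rfl
        refine Finset.mem_erase.mpr ⟨hrq, hs r ?_⟩
        rw [hg''def, Function.update_of_ne hrq] at hr
        exact hr
      have hcard'' : (s.erase q).card ≤ n := by
        rw [Finset.card_erase_of_mem hmemq]; omega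
      rw [hstep]
      exact ih (s.erase q) g'' hg'' hagree'' hs'' hcard''

lemma eqs_congr_influences' (K : CKM) (X : K.Endo) (w : K.World)
    (g g' : ((K.Exo ⊕ K.Endo) × K.World) → K.Val)
    (hg : ∀ r, g r ∈ K.range r.1 r.2) (hg' : ∀ r, g' r ∈ K.range r.1 r.2)
    (hagree : ∀ q, K.Influences q (Sum.inr X, w) → g q = g' q) :
    K.eqs X w g = K.eqs X w g' := by
  letI := K.exoFin; letI := K.endoFin; letI := K.worldFin
  exact K.eqs_congr_aux X w g' hg' Finset.univ.card Finset.univ g hg hagree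
    (fun q _ => Finset.mem_univ q) le_rfl

lemma wf_transGen (K : CKM) (hK : K.Recursive) :
    WellFounded (Relation.TransGen K.Influences) := by
  letI := K.exoFin; letI := K.endoFin; letI := K.worldFin
  haveI : Finite ((K.Exo ⊕ K.Endo) × K.World) := Finite.instProd
  haveI : IsTrans _ (Relation.TransGen K.Influences) :=
    ⟨fun _ _ _ => Relation.TransGen.trans⟩
  haveI : IsIrrefl _ (Relation.TransGen K.Influences) := ⟨hK⟩
  exact Finite.wellFounded_of_trans_of_irrefl _

/-- Recursion step for the canonical solution. -/
def solF (K : CKM) (t : K.Exo → K.World → K.Val)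
    (p : (K.Exo ⊕ K.Endo) × K.World)
    (ih : ∀ q, Relation.TransGen K.Influences q p → K.Val) : K.Val :=
  match p, ih with
  | (Sum.inl U, w), _ => t U w
  | (Sum.inr X, w), ih => K.eqs X w fun q =>
      if h : Relation.TransGen K.Influences q (Sum.inr X, w) then ih q h
      else (K.range_nonempty q.1 q.2).choose

/-- The canonical solution of a recursive causal Kripke setting. -/
noncomputable def theSol (K : CKM) (hK : K.Recursive) (t : K.Exo → K.World → K.Val) :
    ((K.Exo ⊕ K.Endo) × K.World) → K.Val :=
  (K.wf_transGen hK).fix (K.solF t)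

lemma theSol_inl (K : CKM) (hK : K.Recursive) (t : K.Exo → K.World → K.Val)
    (U : K.Exo) (w : K.World) : K.theSol hK t (Sum.inl U, w) = t U w := by
  rw [theSol, WellFounded.fix_eq]; rfl

lemma theSol_inr (K : CKM) (hK : K.Recursive) (t : K.Exo → K.World → K.Val)
    (X : K.Endo) (w : K.World) :
    K.theSol hK t (Sum.inr X, w) = K.eqs X w fun q =>
      if Relation.TransGen K.Influences q (Sum.inr X, w) then K.theSol hK t q
      else (K.range_nonempty q.1 q.2).choose := by
  rw [theSol, WellFounded.fix_eq]; rfl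

lemma solves_mem (K : CKM) (t : K.Exo → K.World → K.Val) (ht : K.ValidContext t)
    (v : ((K.Exo ⊕ K.Endo) × K.World) → K.Val) (hv : K.Solves t v) :
    ∀ p, v p ∈ K.range p.1 p.2 := by
  rintro ⟨Γ, w⟩
  cases Γ with
  | inl U => rw [hv.1 U w]; exact ht U w
  | inr X => rw [hv.2 X w]; exact K.eqs_mem X w v

lemma theSol_mem (K : CKM) (hK : K.Recursive) (t : K.Exo → K.World → K.Val)
    (ht : K.ValidContext t) : ∀ p, K.theSol hK t p ∈ K.range p.1 p.2 := by
  rintro ⟨Γ, w⟩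
  cases Γ with
  | inl U => rw [theSol_inl]; exact ht U w
  | inr X => rw [theSol_inr]; exact K.eqs_mem X w _

lemma theSol_solves (K : CKM) (hK : K.Recursive) (t : K.Exo → K.World → K.Val)
    (ht : K.ValidContext t) : K.Solves t (K.theSol hK t) := by
  refine ⟨fun U w => theSol_inl K hK t U w, fun X w => ?_⟩
  rw [theSol_inr]
  apply eqs_congr_influences'
  · intro r
    by_cases h : Relation.TransGen K.Influences r (Sum.inr X, w)
    · simp only [if_pos h]; exact K.theSol_mem hK t ht r
    · simp only [if_neg h]; exact (K.range_nonempty r.1 r.2).choose_spec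
  · exact K.theSol_mem hK t ht
  · intro q hq
    simp [Relation.TransGen.single hq]

lemma solves_unique (K : CKM) (hK : K.Recursive) (t : K.Exo → K.World → K.Val)
    (ht : K.ValidContext t)
    (v v' : ((K.Exo ⊕ K.Endo) × K.World) → K.Val)
    (hv : K.Solves t v) (hv' : K.Solves t v') : v = v' := by
  funext p
  induction p using (K.wf_transGen hK).induction with
  | _ p ih =>
    obtain ⟨Γ, w⟩ := p
    cases Γ with
    | inl U => rw [hv.1 U w, hv'.1 U w]
    | inr X =>
      rw [hv.2 X w, hv'.2 X w]
      exact K.eqs_congr_influences' X w v v' (K.solves_mem t ht v hv)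
        (K.solves_mem t ht v' hv')
        (fun q hq => ih q (Relation.TransGen.single hq))

lemma influences_doInt (K : CKM) (dom : Finset (K.Endo × K.World))
    (val : K.Endo × K.World → K.Val) {p q : (K.Exo ⊕ K.Endo) × K.World}
    (h : (K.doInt dom val).Influences p q) : K.Influences p q := by
  obtain ⟨X, w, rfl, g, g', hg, hg', hagr, hne⟩ := h
  refine ⟨X, w, rfl, g, g', hg, hg', hagr, ?_⟩
  intro hc
  apply hne
  unfold doInt; dsimp only
  by_cases hcond : ((X, w) : K.Endo × K.World) ∈ dom ∧ val (X, w) ∈ K.range (Sum.inr X) w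
  · simp [hcond]
  · simp [hcond, hc]

lemma doInt_recursive (K : CKM) (hK : K.Recursive) (dom : Finset (K.Endo × K.World))
    (val : K.Endo × K.World → K.Val) : (K.doInt dom val).Recursive := by
  intro p hp
  exact hK p (Relation.TransGen.mono (fun a b h => K.influences_doInt dom val h) _ _ hp)

lemma satE_doInt (K : CKM) (dom : Finset (K.Endo × K.World))
    (val : K.Endo × K.World → K.Val)
    (v : ((K.Exo ⊕ K.Endo) × K.World) → K.Val)
    (w : K.World) (α : Event K.Endo K.World K.Val) :
    (K.doInt dom val).SatE v w α ↔ K.SatE v w α := by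
  induction α generalizing w with
  | eq X x => exact Iff.rfl
  | eqAt X w'' x => exact Iff.rfl
  | neg β ihβ => exact not_congr (ihβ w)
  | conj β γ ihβ ihγ => exact and_congr (ihβ w) (ihγ w)
  | box β ihβ => exact forall₂_congr (fun w'' _ => ihβ w'')

lemma solves_doInt_congr (K : CKM) (t : K.Exo → K.World → K.Val)
    {dom : Finset (K.Endo × K.World)} {val₁ val₂ : K.Endo × K.World → K.Val}
    (h : ∀ p ∈ dom, val₁ p = val₂ p)
    (v : ((K.Exo ⊕ K.Endo) × K.World) → K.Val) :
    (K.doInt dom val₁).Solves t v ↔ (K.doInt dom val₂).Solves t v := by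
  unfold Solves
  refine and_congr Iff.rfl (forall₂_congr fun X w => ?_)
  have : (K.doInt dom val₁).eqs X w v = (K.doInt dom val₂).eqs X w v := by
    unfold doInt; dsimp only
    by_cases hm : ((X, w) : K.Endo × K.World) ∈ dom
    · rw [h _ hm]
    · simp [hm]
  exact Iff.of_eq (congrArg (fun e => v (Sum.inr X, w) = e) this)

lemma satI_congr (K : CKM) (t : K.Exo → K.World → K.Val) (w : K.World)
    (α : Event K.Endo K.World K.Val)
    {d₁ d₂ : Finset (K.Endo × K.World)} {val₁ val₂ : K.Endo × K.World → K.Val}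
    (hd : d₁ = d₂) (h : ∀ p ∈ d₂, val₁ p = val₂ p) :
    K.SatI t d₁ val₁ w α ↔ K.SatI t d₂ val₂ w α := by
  subst hd
  unfold SatI
  constructor
  · intro hs v hv
    refine (K.satE_doInt d₁ val₂ v w α).mpr ?_
    refine (K.satE_doInt d₁ val₁ v w α).mp ?_
    exact hs v ((K.solves_doInt_congr t h v).mpr hv)
  · intro hs v hv
    refine (K.satE_doInt d₁ val₁ v w α).mpr ?_
    refine (K.satE_doInt d₁ val₂ v w α).mp ?_
    exact hs v ((K.solves_doInt_congr t h v).mp hv)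

end CKM

/-- If a primitive event `(X,w) = x` is part of a cause of an event `α`
in a recursive causal Kripke setting `(K,t)` at a world `w'` according to the MODIFIED HP
definition of actual causality, then `(X,w) = x` is part of a cause of `α` in `(K,t)` at
`w'` according to the ORIGINAL HP definition. -/
theorem partOfCause_modified_implies_original (K : CKM) (hK : K.Recursive)
    (t : K.Exo → K.World → K.Val) (ht : K.ValidContext t)
    (w' : K.World) (X : K.Endo) (w : K.World) (x : K.Val)
    (α : Event K.Endo K.World K.Val)
    (h : K.PartOfCauseM t w' X w x α) :
    K.PartOfCauseO t w' X w x α := by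
  classical
  letI := K.endoFin; letI := K.worldFin
  obtain ⟨Y, y, ⟨hAC1, hAC2m, hmin⟩, hXY, hyx⟩ := h
  obtain ⟨N0, y', hy'r, hNα⟩ := hAC2m
  obtain ⟨v₀, hv₀⟩ : ∃ v, K.Solves t v := ⟨K.theSol hK t, K.theSol_solves hK t ht⟩
  have huniq : ∀ v, K.Solves t v → v = v₀ := fun v hv =>
    K.solves_unique hK t ht v v₀ hv hv₀
  set Nbig : Finset (K.Endo × K.World) := (N0 \ Y) ∪ (Y \ {(X, w)}) with hNbig
  have hmemNbig : ∀ p, p ∈ Nbig ↔ ((p ∈ N0 ∧ p ∉ Y) ∨ (p ∈ Y ∧ p ≠ (X, w))) := by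
    intro p
    simp [hNbig, Finset.mem_union, Finset.mem_sdiff, Finset.mem_singleton]
  have hXNbig : (X, w) ∉ Nbig := by
    rw [hmemNbig]
    rintro (⟨_, h2⟩ | ⟨_, h2⟩)
    · exact h2 hXY
    · exact h2 rfl
  refine ⟨{(X, w)}, y, ⟨?_, ?_, ?_⟩, Finset.mem_singleton_self _, hyx⟩
  · -- AC1
    intro v hv
    obtain ⟨hα, hvals⟩ := hAC1 v hv
    refine ⟨hα, ?_⟩
    intro p hp
    rw [Finset.mem_singleton] at hp
    subst hp
    exact hvals _ hXY
  · -- AC2o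
    refine ⟨Nbigᶜ, Nbig, y',
      (fun p => if p ∈ Y then y' p else v₀ (Sum.inr p.1, p.2)),
      ?_, disjoint_compl_left, fun p => ?_, ?_, ?_, ?_, ?_⟩
    · exact Finset.singleton_subset_iff.mpr (Finset.mem_compl.mpr hXNbig)
    · by_cases hp : p ∈ Nbig
      · exact Or.inr hp
      · exact Or.inl (Finset.mem_compl.mpr hp)
    · intro p hp
      rw [Finset.mem_singleton] at hp
      subst hp
      exact hy'r _ hXY
    · intro p _
      by_cases hpY : p ∈ Y
      · simp only [if_pos hpY]; exact hy'r _ hpY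
      · simp only [if_neg hpY]; exact K.solves_mem t ht v₀ hv₀ _
    · -- AC2a
      have hm := hNα v₀ hv₀
      have hd : ({(X, w)} : Finset (K.Endo × K.World)) ∪ Nbig = Y ∪ N0 := by
        ext p
        by_cases h1 : p = (X, w)
        · subst h1; simp [hmemNbig, hXY]
        · simp only [Finset.mem_union, Finset.mem_singleton, h1, false_or, hmemNbig]
          by_cases h2 : p ∈ Y <;> simp [h1, h2]
      refine (K.satI_congr t w' (.neg α) hd ?_).mpr hm
      intro p _
      by_cases h1 : p = (X, w)
      · subst h1; simp [hXY]
      · simp [Finset.mem_singleton, h1]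
    · -- AC2b
      intro v hv Z' hZ'
      rw [huniq v hv]
      by_contra hno
      unfold CKM.SatI at hno
      push_neg at hno
      obtain ⟨v₁, hv₁, hne⟩ := hno
      have hMrec := K.doInt_recursive hK ({(X, w)} ∪ Nbig ∪ Z')
        (fun p => if p ∈ ({(X, w)} : Finset (K.Endo × K.World)) then y p
          else if p ∈ Nbig then (if p ∈ Y then y' p else v₀ (Sum.inr p.1, p.2))
          else v₀ (Sum.inr p.1, p.2))
      have htM : (K.doInt ({(X, w)} ∪ Nbig ∪ Z')
        (fun p => if p ∈ ({(X, w)} : Finset (K.Endo × K.World)) then y p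
          else if p ∈ Nbig then (if p ∈ Y then y' p else v₀ (Sum.inr p.1, p.2))
          else v₀ (Sum.inr p.1, p.2))).ValidContext t := ht
      have hMuniq := fun u hu => (K.doInt _ _).solves_unique hMrec t htM u v₁ hu hv₁
      have hss : Y \ {(X, w)} ⊂ Y :=
        Finset.sdiff_ssubset (Finset.singleton_subset_iff.mpr hXY)
          (Finset.singleton_nonempty _)
      refine hmin (Y \ {(X, w)}) hss y ⟨?_, ?_⟩
      · -- AC1 for the smaller set
        intro u hu
        exact ⟨(hAC1 u hu).1, fun p hp => (hAC1 u hu).2 p (Finset.mem_sdiff.mp hp).1⟩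
      · -- AC2m for the smaller set
        refine ⟨{(X, w)} ∪ (N0 \ Y) ∪ Z', y',
          fun p hp => hy'r p (Finset.mem_sdiff.mp hp).1, ?_⟩
        intro u hu
        rw [huniq u hu]
        have hd2 : (Y \ {(X, w)}) ∪ ({(X, w)} ∪ (N0 \ Y) ∪ Z')
            = {(X, w)} ∪ Nbig ∪ Z' := by
          ext p
          by_cases h1 : p = (X, w)
          · subst h1; simp [hmemNbig]
          · simp only [Finset.mem_union, Finset.mem_sdiff, Finset.mem_singleton, h1,
              false_or, or_false, hmemNbig, false_and, and_false]
            by_cases h2 : p ∈ Y <;> simp [h1, h2] <;> tauto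
        have hval2 : ∀ p ∈ ({(X, w)} : Finset (K.Endo × K.World)) ∪ Nbig ∪ Z',
            (if p ∈ Y \ {(X, w)} then y' p else v₀ (Sum.inr p.1, p.2))
            = (if p ∈ ({(X, w)} : Finset (K.Endo × K.World)) then y p
              else if p ∈ Nbig then (if p ∈ Y then y' p else v₀ (Sum.inr p.1, p.2))
              else v₀ (Sum.inr p.1, p.2)) := by
          intro p _
          by_cases h1 : p = (X, w)
          · subst h1
            rw [if_neg (show (X, w) ∉ Y \ {(X, w)} by simp),
              if_pos (Finset.mem_singleton_self _)]
            exact (hAC1 v₀ hv₀).2 _ hXY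
          · by_cases h2 : p ∈ Y
            · rw [if_pos (Finset.mem_sdiff.mpr ⟨h2, by simp [h1]⟩),
                if_neg (show p ∉ ({(X, w)} : Finset (K.Endo × K.World)) by simp [h1]),
                if_pos ((hmemNbig p).mpr (Or.inr ⟨h2, h1⟩)), if_pos h2]
            · rw [if_neg (show p ∉ Y \ {(X, w)} by simp [h2]),
                if_neg (show p ∉ ({(X, w)} : Finset (K.Endo × K.World)) by simp [h1])]
              by_cases h3 : p ∈ Nbig
              · rw [if_pos h3, if_neg h2]
              · rw [if_neg h3]
        refine (K.satI_congr t w' (.neg α) hd2 hval2).mpr ?_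
        intro v₂ hv₂
        have hv₂₁ : v₂ = v₁ := hMuniq v₂ hv₂
        exact fun hc => hne (hv₂₁ ▸ hc)
  · -- AC3
    intro Y'' hY'' y'' hcon
    obtain ⟨hA1, hA2⟩ := hcon
    rw [Finset.ssubset_singleton_iff] at hY''
    subst hY''
    obtain ⟨Z2, N2, y2', n2, _, _, _, _, _, hsA, hsB⟩ := hA2
    have h2 := hsB v₀ hv₀ ∅ (Finset.empty_subset _)
    obtain ⟨u, hu⟩ : ∃ u, (K.doInt (∅ ∪ N2)
        (fun p => if p ∈ (∅ : Finset (K.Endo × K.World)) then y2' p else n2 p)).Solves t u := by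
      refine ⟨(K.doInt _ _).theSol (K.doInt_recursive hK _ _) t, ?_⟩
      exact (K.doInt _ _).theSol_solves (K.doInt_recursive hK _ _) t ht
    have hneg := hsA u hu
    have hd : (∅ : Finset (K.Endo × K.World)) ∪ N2 = ∅ ∪ N2 ∪ ∅ :=
      (Finset.union_empty _).symm
    have hval : ∀ p ∈ (∅ : Finset (K.Endo × K.World)) ∪ N2 ∪ ∅,
        (if p ∈ (∅ : Finset (K.Endo × K.World)) then y2' p else n2 p)
        = (if p ∈ (∅ : Finset (K.Endo × K.World)) then y'' p
          else if p ∈ N2 then n2 p else v₀ (Sum.inr p.1, p.2)) := by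
      intro p hp
      simp only [Finset.union_empty, Finset.empty_union] at hp
      simp [Finset.notMem_empty, hp]
    have hpos := (K.satI_congr t w' α hd hval).mpr h2 u hu
    exact hneg hpos
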